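/- Assume d ≥ 1, L ≥ 1, γ > 0, λ > 0. There exists ᾱ > 0 such that for every step size α with 0 < α ≤ ᾱ and every (κ, ν) ∈ [−1, 1]², R(g_α(κ, ν)) − R(κ, ν) ≤ −(α/2)·[ (∂κR(κ, ν))²·(1 − κ²) + (∂νR(κ, ν))²·(1 − ν²) ]. In particular the reduced risk R is nonincreasing along the PGD iterates. -/

import Mathlib

open MeasureTheory ProbabilityTheory Real Filter

noncomputable def erf (u : ℝ) : ℝ := 2 / Real.sqrt Real.pi * ∫ r in (0:ℝ)..u, Real.exp (-r ^ 2)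

noncomputable def zeta (t s : ℝ) : ℝ := ∫ g, erf (t + g) ^ 2 ∂(gaussianReal 0 s.toNNReal)

/-- The reduced risk `R(κ, ν)` on the invariant manifold. -/
noncomputable def Rred (d L : ℕ) (γ lam ε : ℝ) (κ ν : ℝ) : ℝ :=
  γ ^ 2 - 2 * γ ^ 2 * ν * erf (lam * Real.sqrt ((d : ℝ) / 2) * κ /
      Real.sqrt (1 + 2 * lam ^ 2 * γ ^ 2))
    + γ ^ 2 * zeta (lam * Real.sqrt ((d : ℝ) / 2) * κ) (lam ^ 2 * γ ^ 2)
    + ((L : ℝ) - 1) * zeta 0 (lam ^ 2) + ε ^ 2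

/-- Partial derivative `∂κR` of the reduced risk with respect to its first argument. -/
noncomputable def dkR (d L : ℕ) (γ lam ε : ℝ) (κ ν : ℝ) : ℝ :=
  deriv (fun x => Rred d L γ lam ε x ν) κ

/-- Partial derivative `∂νR` of the reduced risk with respect to its second argument. -/
noncomputable def dvR (d L : ℕ) (γ lam ε : ℝ) (κ ν : ℝ) : ℝ :=
  deriv (fun y => Rred d L γ lam ε κ y) ν

/-- The PGD map `g_α`. -/
noncomputable def pgd (d L : ℕ) (γ lam ε α : ℝ) (p : ℝ × ℝ) : ℝ × ℝ :=
  ((p.1 - α * dkR d L γ lam ε p.1 p.2 * (1 - p.1 ^ 2)) /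
      Real.sqrt (1 + α ^ 2 * (dkR d L γ lam ε p.1 p.2) ^ 2 * (1 - p.1 ^ 2)),
   (p.2 - α * dvR d L γ lam ε p.1 p.2 * (1 - p.2 ^ 2)) /
      Real.sqrt (1 + α ^ 2 * (dvR d L γ lam ε p.1 p.2) ^ 2 * (1 - p.2 ^ 2)))

/-- The square `[−1, 1]²`. -/
def sqIcc : Set (ℝ × ℝ) := {p | p.1 ∈ Set.Icc (-1 : ℝ) 1 ∧ p.2 ∈ Set.Icc (-1 : ℝ) 1}

/-! ### Auxiliary facts about `erf` -/

noncomputable def erf' (u : ℝ) : ℝ := 2 / Real.sqrt Real.pi * Real.exp (-u ^ 2)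
noncomputable def erf'' (u : ℝ) : ℝ := 2 / Real.sqrt Real.pi * (Real.exp (-u ^ 2) * (-2 * u))
noncomputable def psi (u : ℝ) : ℝ := erf u ^ 2
noncomputable def phi (u : ℝ) : ℝ := 2 * erf u * erf' u

lemma cont_exp_sq : Continuous fun r : ℝ => Real.exp (-r ^ 2) := by continuity

lemma erf_hasDerivAt (u : ℝ) : HasDerivAt erf (erf' u) u := by
  have h : ∀ x : ℝ, IntervalIntegrable (fun r => Real.exp (-r ^ 2)) volume 0 x :=
    fun x => (cont_exp_sq).intervalIntegrable 0 x
  have := (intervalIntegral.integral_hasDerivAt_right (h u)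
    (cont_exp_sq.stronglyMeasurableAtFilter _ _) (cont_exp_sq.continuousAt))
  exact this.const_mul (2 / Real.sqrt Real.pi)

lemma sqrt_pi_gt_one : (1:ℝ) < Real.sqrt Real.pi := by
  rw [show (1:ℝ) = Real.sqrt 1 by simp]
  exact Real.sqrt_lt_sqrt (by norm_num) (by linarith [Real.pi_gt_three])

lemma erf'_nonneg (u : ℝ) : 0 ≤ erf' u := by
  unfold erf'; positivity

lemma erf'_le_two (u : ℝ) : |erf' u| ≤ 2 := by
  rw [abs_of_nonneg (erf'_nonneg u)]
  unfold erf'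
  have h1 : Real.exp (-u ^ 2) ≤ 1 := by
    rw [Real.exp_le_one_iff]; nlinarith [sq_nonneg u]
  have h2 : 2 / Real.sqrt Real.pi ≤ 2 := by
    rw [div_le_iff₀ (by linarith [sqrt_pi_gt_one])]
    nlinarith [sqrt_pi_gt_one]
  nlinarith [sqrt_pi_gt_one, Real.exp_pos (-u^2), h1, h2]

lemma abs_erf_le_two (u : ℝ) : |erf u| ≤ 2 := by
  have hint : Integrable (fun r : ℝ => Real.exp (-r ^ 2)) := by
    simpa using integrable_exp_neg_mul_sq (b := (1:ℝ)) one_pos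
  have hfull : (∫ r : ℝ, Real.exp (-r ^ 2)) = Real.sqrt Real.pi := by
    simpa using integral_gaussian 1
  have key : ∀ a b : ℝ, a ≤ b → (∫ r in a..b, Real.exp (-r ^ 2)) ≤ Real.sqrt Real.pi := by
    intro a b hab
    rw [intervalIntegral.integral_of_le hab, ← hfull]
    exact setIntegral_le_integral hint (Filter.Eventually.of_forall fun x => (Real.exp_pos _).le)
  have hnn : ∀ a b : ℝ, a ≤ b → 0 ≤ (∫ r in a..b, Real.exp (-r ^ 2)) := by
    intro a b hab
    apply intervalIntegral.integral_nonneg hab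
    intro x _; positivity
  unfold erf
  rcases le_total 0 u with h | h
  · rw [abs_mul, abs_of_nonneg (hnn 0 u h)]
    have h2 : |2 / Real.sqrt Real.pi| = 2 / Real.sqrt Real.pi := abs_of_nonneg (by positivity)
    rw [h2]
    have := key 0 u h
    rw [div_mul_eq_mul_div, div_le_iff₀ (by linarith [sqrt_pi_gt_one])]
    nlinarith [sqrt_pi_gt_one, hnn 0 u h]
  · rw [intervalIntegral.integral_symm]
    rw [abs_mul, abs_neg, abs_of_nonneg (hnn u 0 h)]
    have h2 : |2 / Real.sqrt Real.pi| = 2 / Real.sqrt Real.pi := abs_of_nonneg (by positivity)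
    rw [h2]
    have := key u 0 h
    rw [div_mul_eq_mul_div, div_le_iff₀ (by linarith [sqrt_pi_gt_one])]
    nlinarith [sqrt_pi_gt_one, hnn u 0 h]

lemma erf'_hasDerivAt (u : ℝ) : HasDerivAt erf' (erf'' u) u := by
  unfold erf' erf''
  have h1 : HasDerivAt (fun u : ℝ => -u ^ 2) (-2 * u) u := by
    simpa using ((hasDerivAt_pow 2 u)).fun_neg
  exact (h1.exp).const_mul _

lemma erf''_le_two (u : ℝ) : |erf'' u| ≤ 2 := by
  unfold erf''
  have key : |Real.exp (-u ^ 2) * (-2 * u)| ≤ 1 := by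
    rw [abs_mul, abs_of_nonneg (Real.exp_pos _).le]
    have h1 : 1 + u ^ 2 ≤ Real.exp (u ^ 2) := by
      linarith [Real.add_one_le_exp (u ^ 2)]
    have h2 : |(-2 : ℝ) * u| = 2 * |u| := by
      rw [abs_mul]; norm_num
    rw [h2, Real.exp_neg]
    rw [inv_mul_le_iff₀ (Real.exp_pos _)]
    have h3 : 2 * |u| ≤ 1 + u ^ 2 := by nlinarith [sq_nonneg (|u| - 1), sq_abs u]
    linarith
  rw [abs_mul]
  have h4 : |2 / Real.sqrt Real.pi| ≤ 2 := by
    rw [abs_of_nonneg (by positivity), div_le_iff₀ (by linarith [sqrt_pi_gt_one])]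
    nlinarith [sqrt_pi_gt_one]
  nlinarith [abs_nonneg (Real.exp (-u ^ 2) * (-2 * u)), abs_nonneg ((2:ℝ) / Real.sqrt Real.pi)]

lemma psi_hasDerivAt (u : ℝ) : HasDerivAt psi (phi u) u := by
  have := (erf_hasDerivAt u).fun_pow 2
  have hpsi : psi = fun i => erf i ^ 2 := rfl
  rw [hpsi]
  simpa [phi, mul_comm, mul_assoc, mul_left_comm] using this

lemma phi_hasDerivAt (u : ℝ) :
    HasDerivAt phi (2 * erf' u * erf' u + 2 * erf u * erf'' u) u := by
  have h := ((erf_hasDerivAt u).const_mul 2).mul (erf'_hasDerivAt u)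
  have heq : phi = fun y => 2 * erf y * erf' y := rfl
  rw [heq]
  exact h

lemma abs_psi_le (u : ℝ) : |psi u| ≤ 4 := by
  unfold psi
  have := abs_erf_le_two u
  rw [abs_pow]
  nlinarith [abs_nonneg (erf u)]

lemma abs_phi_le (u : ℝ) : |phi u| ≤ 8 := by
  unfold phi
  rw [abs_mul, abs_mul, abs_two]
  nlinarith [abs_erf_le_two u, erf'_le_two u, abs_nonneg (erf u), abs_nonneg (erf' u)]

lemma abs_phi'_le (u : ℝ) : |2 * erf' u * erf' u + 2 * erf u * erf'' u| ≤ 16 := by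
  have h1 := erf'_le_two u
  have h2 := abs_erf_le_two u
  have h3 := erf''_le_two u
  have e1 : |2 * erf' u * erf' u| ≤ 8 := by
    rw [abs_mul, abs_mul, abs_two]
    nlinarith [abs_nonneg (erf' u)]
  have e2 : |2 * erf u * erf'' u| ≤ 8 := by
    rw [abs_mul, abs_mul, abs_two]
    nlinarith [abs_nonneg (erf u), abs_nonneg (erf'' u)]
  calc |2 * erf' u * erf' u + 2 * erf u * erf'' u|
      ≤ |2 * erf' u * erf' u| + |2 * erf u * erf'' u| := abs_add_le _ _
    _ ≤ 16 := by linarith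

/-! ### Mean value theorem helpers -/

section helpers
variable (f f' : ℝ → ℝ)

lemma slope_eq {x y c : ℝ} (h : x ≠ y) (hc : f' c = (f y - f x) / (y - x)) :
    f y - f x = f' c * (y - x) := by
  field_simp [sub_ne_zero.mpr (Ne.symm h)] at hc
  linarith [hc]

/-- MVT: bounded derivative gives Lipschitz estimate. -/
lemma lip_of_deriv_bound (C : ℝ) (hd : ∀ x, HasDerivAt f (f' x) x)
    (hb : ∀ x, |f' x| ≤ C) (x y : ℝ) : |f y - f x| ≤ C * |y - x| := by
  rcases lt_trichotomy x y with h | h | h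
  · obtain ⟨c, _, hc⟩ := exists_hasDerivAt_eq_slope f f' h
      (fun z _ => (hd z).continuousAt.continuousWithinAt) (fun z _ => hd z)
    rw [slope_eq f f' h.ne hc, abs_mul]
    exact mul_le_mul_of_nonneg_right (hb c) (abs_nonneg _)
  · subst h; simp
  · obtain ⟨c, _, hc⟩ := exists_hasDerivAt_eq_slope f f' h
      (fun z _ => (hd z).continuousAt.continuousWithinAt) (fun z _ => hd z)
    have hc' : f y - f x = f' c * (y - x) := by
      have : f x - f y = f' c * (x - y) := slope_eq f f' h.ne hc
      nlinarith [this]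
    rw [hc', abs_mul]
    exact mul_le_mul_of_nonneg_right (hb c) (abs_nonneg _)

/-- One-sided Taylor bound with Lipschitz derivative. -/
lemma taylor_bound (C : ℝ) (hd : ∀ x, HasDerivAt f (f' x) x)
    (hlip : ∀ x y, |f' y - f' x| ≤ C * |y - x|) (x y : ℝ) :
    f y - f x ≤ f' x * (y - x) + C * (y - x) ^ 2 := by
  rcases eq_or_ne x y with h | h
  · simp [h]
  have hC0 : 0 ≤ C := by
    by_contra hC
    push_neg at hC
    have h1 := hlip x y
    have h2 : 0 < |y - x| := abs_pos.mpr (sub_ne_zero.mpr (Ne.symm h))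
    nlinarith [abs_nonneg (f' y - f' x)]
  have key : ∀ c : ℝ, f y - f x = f' c * (y - x) → |c - x| ≤ |y - x| →
      f y - f x ≤ f' x * (y - x) + C * (y - x) ^ 2 := by
    intro c hc hcx
    have h1 : |f' c - f' x| ≤ C * |y - x| :=
      le_trans (hlip x c) (mul_le_mul_of_nonneg_left hcx hC0)
    have h2 : (f' c - f' x) * (y - x) ≤ |f' c - f' x| * |y - x| := by
      calc (f' c - f' x) * (y - x) ≤ |(f' c - f' x) * (y - x)| := le_abs_self _
        _ = |f' c - f' x| * |y - x| := abs_mul _ _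
    have h3 : |f' c - f' x| * |y - x| ≤ C * (y - x) ^ 2 := by
      have h4 : |y - x| * |y - x| = (y - x) ^ 2 := by rw [← abs_mul, ← sq, abs_sq]
      nlinarith [mul_le_mul_of_nonneg_right h1 (abs_nonneg (y - x))]
    have h5 : (f' c - f' x) * (y - x) = f' c * (y - x) - f' x * (y - x) := by ring
    linarith [hc, h2, h3]
  rcases lt_or_gt_of_ne h with h' | h'
  · obtain ⟨c, hmem, hc⟩ := exists_hasDerivAt_eq_slope f f' h'
      (fun z _ => (hd z).continuousAt.continuousWithinAt) (fun z _ => hd z)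
    refine key c (slope_eq f f' h hc) ?_
    obtain ⟨h1', h2'⟩ := hmem
    rw [abs_of_nonneg (by linarith), abs_of_nonneg (by linarith)]
    linarith
  · obtain ⟨c, hmem, hc⟩ := exists_hasDerivAt_eq_slope f f' h'
      (fun z _ => (hd z).continuousAt.continuousWithinAt) (fun z _ => hd z)
    have hc2 : f y - f x = f' c * (y - x) := by
      have : f x - f y = f' c * (x - y) := slope_eq f f' (Ne.symm h) hc
      nlinarith [this]
    refine key c hc2 ?_
    obtain ⟨h1', h2'⟩ := hmem
    rw [abs_of_nonpos (by linarith), abs_of_nonpos (by linarith)]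
    linarith

end helpers

lemma erf_lip (x y : ℝ) : |erf y - erf x| ≤ 2 * |y - x| :=
  lip_of_deriv_bound erf erf' 2 erf_hasDerivAt erf'_le_two x y

lemma erf'_lip (x y : ℝ) : |erf' y - erf' x| ≤ 2 * |y - x| :=
  lip_of_deriv_bound erf' erf'' 2 erf'_hasDerivAt erf''_le_two x y

lemma psi_lip (x y : ℝ) : |psi y - psi x| ≤ 8 * |y - x| :=
  lip_of_deriv_bound psi phi 8 psi_hasDerivAt abs_phi_le x y

lemma phi_lip (x y : ℝ) : |phi y - phi x| ≤ 16 * |y - x| :=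
  lip_of_deriv_bound phi (fun u => 2 * erf' u * erf' u + 2 * erf u * erf'' u) 16
    phi_hasDerivAt abs_phi'_le x y

/-! ### Differentiating `zeta` under the integral -/

lemma erf_continuous : Continuous erf :=
  continuous_iff_continuousAt.mpr fun u => (erf_hasDerivAt u).continuousAt

lemma psi_continuous : Continuous psi := by
  unfold psi; exact (erf_continuous.pow 2)

lemma phi_continuous : Continuous phi := by
  unfold phi erf'
  exact ((continuous_const.mul erf_continuous).mul
    (continuous_const.mul (continuous_neg.comp (continuous_pow 2)).rexp))

noncomputable def Zd (s t : ℝ) : ℝ := ∫ g, phi (t + g) ∂(gaussianReal 0 s.toNNReal)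

lemma integrable_of_bdd {s : ℝ} {f : ℝ → ℝ} (hf : Continuous f) (C : ℝ)
    (hb : ∀ x, |f x| ≤ C) : Integrable f (gaussianReal 0 s.toNNReal) := by
  refine Integrable.mono' (integrable_const C) hf.aestronglyMeasurable ?_
  filter_upwards with x
  simpa [Real.norm_eq_abs] using hb x

lemma zeta_hasDerivAt (s t : ℝ) : HasDerivAt (fun x => zeta x s) (Zd s t) t := by
  have key := hasDerivAt_integral_of_dominated_loc_of_deriv_le
    (μ := gaussianReal 0 s.toNNReal) (x₀ := t)
    (F := fun x g => psi (x + g)) (F' := fun x g => phi (x + g))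
    (bound := fun _ => (8 : ℝ)) (Metric.ball_mem_nhds t one_pos)
    (Filter.Eventually.of_forall fun x =>
      ((psi_continuous.comp (continuous_const.add continuous_id)).aestronglyMeasurable))
    (integrable_of_bdd (psi_continuous.comp (continuous_const.add continuous_id)) 4
      (fun x => abs_psi_le _))
    ((phi_continuous.comp (continuous_const.add continuous_id)).aestronglyMeasurable)
    (Filter.Eventually.of_forall fun g x _ => by
      simpa [Real.norm_eq_abs] using abs_phi_le (x + g))
    (integrable_const 8)
    (Filter.Eventually.of_forall fun g x _ => by
      have h := (psi_hasDerivAt (x + g)).comp x ((hasDerivAt_id x).add_const g)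
      simpa [Function.comp_def] using h)
  have h2 := key.2
  have heq : (fun x => ∫ g, psi (x + g) ∂(gaussianReal 0 s.toNNReal)) = fun x => zeta x s := by
    funext x; rfl
  rw [heq] at h2
  exact h2

lemma abs_Zd_le (s t : ℝ) : |Zd s t| ≤ 8 := by
  unfold Zd
  have := norm_integral_le_of_norm_le_const (μ := gaussianReal 0 s.toNNReal)
    (f := fun g => phi (t + g)) (C := 8)
    (Filter.Eventually.of_forall fun g => by simpa [Real.norm_eq_abs] using abs_phi_le (t + g))
  simpa [Real.norm_eq_abs, measure_univ] using this

lemma Zd_lip (s : ℝ) (x y : ℝ) : |Zd s y - Zd s x| ≤ 16 * |y - x| := by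
  unfold Zd
  rw [← integral_sub
    (integrable_of_bdd (f := fun g => phi (y + g))
      (phi_continuous.comp (continuous_const.add continuous_id)) 8 (fun g => abs_phi_le _))
    (integrable_of_bdd (f := fun g => phi (x + g))
      (phi_continuous.comp (continuous_const.add continuous_id)) 8 (fun g => abs_phi_le _))]
  have := norm_integral_le_of_norm_le_const (μ := gaussianReal 0 s.toNNReal)
    (f := fun g => phi (y + g) - phi (x + g)) (C := 16 * |y - x|)
    (Filter.Eventually.of_forall fun g => by
      have := phi_lip (x + g) (y + g)
      simpa [Real.norm_eq_abs, add_comm, add_sub_add_right_eq_sub] using this)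
  simpa [Real.norm_eq_abs, measure_univ] using this

/-! ### Explicit partial derivatives of the reduced risk -/

section Rderiv
variable (d L : ℕ) (γ lam ε : ℝ)

/-- explicit partial derivative in κ -/
noncomputable def Hk (κ ν : ℝ) : ℝ :=
  -(2 * γ ^ 2 * ν * (erf' (lam * Real.sqrt ((d : ℝ) / 2) * κ /
      Real.sqrt (1 + 2 * lam ^ 2 * γ ^ 2)) *
      (lam * Real.sqrt ((d : ℝ) / 2) / Real.sqrt (1 + 2 * lam ^ 2 * γ ^ 2))))
  + γ ^ 2 * (Zd (lam ^ 2 * γ ^ 2) (lam * Real.sqrt ((d : ℝ) / 2) * κ) *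
      (lam * Real.sqrt ((d : ℝ) / 2)))

/-- explicit partial derivative in ν -/
noncomputable def Hv (κ : ℝ) : ℝ :=
  -(2 * γ ^ 2 * erf (lam * Real.sqrt ((d : ℝ) / 2) * κ /
      Real.sqrt (1 + 2 * lam ^ 2 * γ ^ 2)))

lemma Rred_hasDerivAt_k (ν κ : ℝ) :
    HasDerivAt (fun x => Rred d L γ lam ε x ν) (Hk d γ lam κ ν) κ := by
  set c0 := lam * Real.sqrt ((d : ℝ) / 2) with hc0
  set Dv := Real.sqrt (1 + 2 * lam ^ 2 * γ ^ 2) with hDv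
  have hinner : HasDerivAt (fun x : ℝ => c0 * x / Dv) (c0 / Dv) κ := by
    simpa using ((hasDerivAt_id κ).const_mul c0).div_const Dv
  have h2 : HasDerivAt (fun x : ℝ => erf (c0 * x / Dv)) (erf' (c0 * κ / Dv) * (c0 / Dv)) κ :=
    by have := (erf_hasDerivAt (c0 * κ / Dv)).comp κ hinner; exact this
  have hinner2 : HasDerivAt (fun x : ℝ => c0 * x) c0 κ := by
    simpa using (hasDerivAt_id κ).const_mul c0
  have h3 : HasDerivAt (fun x : ℝ => zeta (c0 * x) (lam ^ 2 * γ ^ 2))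
      (Zd (lam ^ 2 * γ ^ 2) (c0 * κ) * c0) κ :=
    (zeta_hasDerivAt (lam ^ 2 * γ ^ 2) (c0 * κ)).comp κ hinner2
  have h4 := (((h2.const_mul (2 * γ ^ 2 * ν)).const_sub (γ ^ 2)).add
      (h3.const_mul (γ ^ 2))).add_const (((L : ℝ) - 1) * zeta 0 (lam ^ 2))
  have h5 := h4.add_const (ε ^ 2)
  have heq : (fun x => Rred d L γ lam ε x ν)
      = fun x => γ ^ 2 - 2 * γ ^ 2 * ν * erf (c0 * x / Dv)
          + γ ^ 2 * zeta (c0 * x) (lam ^ 2 * γ ^ 2)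
          + ((L : ℝ) - 1) * zeta 0 (lam ^ 2) + ε ^ 2 := by
    funext x; rfl
  rw [heq]
  exact h5

lemma Rred_hasDerivAt_v (κ ν : ℝ) :
    HasDerivAt (fun y => Rred d L γ lam ε κ y) (Hv d γ lam κ) ν := by
  set c0 := lam * Real.sqrt ((d : ℝ) / 2) with hc0
  set Dv := Real.sqrt (1 + 2 * lam ^ 2 * γ ^ 2) with hDv
  set E := erf (c0 * κ / Dv) with hE
  have h1 : HasDerivAt (fun y : ℝ => 2 * γ ^ 2 * y * E) (2 * γ ^ 2 * E) ν := by
    have := ((hasDerivAt_id ν).const_mul (2 * γ ^ 2)).mul_const E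
    simpa [mul_comm, mul_assoc, mul_left_comm] using this
  have h2 := ((h1.const_sub (γ ^ 2)).add_const
      (γ ^ 2 * zeta (c0 * κ) (lam ^ 2 * γ ^ 2))).add_const
      (((L : ℝ) - 1) * zeta 0 (lam ^ 2))
  have h3 := h2.add_const (ε ^ 2)
  have heq : (fun y => Rred d L γ lam ε κ y)
      = fun y => γ ^ 2 - 2 * γ ^ 2 * y * E
          + γ ^ 2 * zeta (c0 * κ) (lam ^ 2 * γ ^ 2)
          + ((L : ℝ) - 1) * zeta 0 (lam ^ 2) + ε ^ 2 := by
    funext y; rfl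
  rw [heq]
  exact h3

lemma dkR_eq (κ ν : ℝ) : dkR d L γ lam ε κ ν = Hk d γ lam κ ν :=
  (Rred_hasDerivAt_k d L γ lam ε ν κ).deriv

lemma dvR_eq (κ ν : ℝ) : dvR d L γ lam ε κ ν = Hv d γ lam κ :=
  (Rred_hasDerivAt_v d L γ lam ε κ ν).deriv

lemma Rred_lin (κ ν ν' : ℝ) :
    Rred d L γ lam ε κ ν' - Rred d L γ lam ε κ ν = Hv d γ lam κ * (ν' - ν) := by
  simp only [Rred, Hv]
  ring

end Rderiv

/-! ### Bounds on the partial derivatives -/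

noncomputable def CC (d : ℕ) (γ lam : ℝ) : ℝ :=
  4 * γ ^ 2 * (lam * Real.sqrt ((d : ℝ) / 2) / Real.sqrt (1 + 2 * lam ^ 2 * γ ^ 2))
  + 8 * γ ^ 2 * (lam * Real.sqrt ((d : ℝ) / 2))
  + 4 * γ ^ 2 * (lam * Real.sqrt ((d : ℝ) / 2) / Real.sqrt (1 + 2 * lam ^ 2 * γ ^ 2)) ^ 2
  + 16 * γ ^ 2 * (lam * Real.sqrt ((d : ℝ) / 2)) ^ 2
  + 4 * γ ^ 2 + 1

lemma c0_nonneg (d : ℕ) (lam : ℝ) (hlam : 0 ≤ lam) : 0 ≤ lam * Real.sqrt ((d : ℝ) / 2) :=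
  mul_nonneg hlam (Real.sqrt_nonneg _)

lemma Dv_pos (γ lam : ℝ) : 0 < Real.sqrt (1 + 2 * lam ^ 2 * γ ^ 2) :=
  Real.sqrt_pos.mpr (by positivity)

lemma one_le_CC (d : ℕ) (γ lam : ℝ) (hlam : 0 ≤ lam) : 1 ≤ CC d γ lam := by
  have h1 := c0_nonneg d lam hlam
  have h2 := Dv_pos γ lam
  have h3 : 0 ≤ lam * Real.sqrt ((d : ℝ) / 2) / Real.sqrt (1 + 2 * lam ^ 2 * γ ^ 2) :=
    div_nonneg h1 h2.le
  unfold CC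
  nlinarith [sq_nonneg γ, sq_nonneg (lam * Real.sqrt ((d : ℝ) / 2)),
    sq_nonneg (lam * Real.sqrt ((d : ℝ) / 2) / Real.sqrt (1 + 2 * lam ^ 2 * γ ^ 2)),
    mul_nonneg (sq_nonneg γ) h3, mul_nonneg (sq_nonneg γ) h1,
    mul_nonneg (sq_nonneg γ) (sq_nonneg (lam * Real.sqrt ((d : ℝ) / 2) / Real.sqrt (1 + 2 * lam ^ 2 * γ ^ 2))),
    mul_nonneg (sq_nonneg γ) (sq_nonneg (lam * Real.sqrt ((d : ℝ) / 2)))]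

lemma abs_Hk_le (d : ℕ) (γ lam : ℝ) (hlam : 0 ≤ lam) (κ ν : ℝ) (hν : |ν| ≤ 1) :
    |Hk d γ lam κ ν| ≤ CC d γ lam := by
  set c0 := lam * Real.sqrt ((d : ℝ) / 2) with hc0
  set Dv := Real.sqrt (1 + 2 * lam ^ 2 * γ ^ 2) with hDv
  have h1 : (0:ℝ) ≤ c0 := c0_nonneg d lam hlam
  have h2 : (0:ℝ) < Dv := Dv_pos γ lam
  have hcD : (0:ℝ) ≤ c0 / Dv := div_nonneg h1 h2.le
  have e1 : |2 * γ ^ 2 * ν * (erf' (c0 * κ / Dv) * (c0 / Dv))| ≤ 4 * γ ^ 2 * (c0 / Dv) := by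
    rw [abs_mul, abs_mul, abs_mul, abs_mul, abs_two, abs_of_nonneg (sq_nonneg γ),
      abs_of_nonneg hcD]
    have hb : |ν| * |erf' (c0 * κ / Dv)| ≤ 2 := by
      nlinarith [abs_nonneg ν, abs_nonneg (erf' (c0 * κ / Dv)), erf'_le_two (c0 * κ / Dv)]
    nlinarith [mul_le_mul_of_nonneg_left hb
      (mul_nonneg (mul_nonneg (by norm_num : (0:ℝ) ≤ 2) (sq_nonneg γ)) hcD)]
  have e2 : |γ ^ 2 * (Zd (lam ^ 2 * γ ^ 2) (c0 * κ) * c0)| ≤ 8 * γ ^ 2 * c0 := by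
    rw [abs_mul, abs_mul, abs_of_nonneg (sq_nonneg γ), abs_of_nonneg h1]
    nlinarith [mul_le_mul_of_nonneg_right (abs_Zd_le (lam ^ 2 * γ ^ 2) (c0 * κ)) h1,
      sq_nonneg γ, mul_le_mul_of_nonneg_left
        (mul_le_mul_of_nonneg_right (abs_Zd_le (lam ^ 2 * γ ^ 2) (c0 * κ)) h1) (sq_nonneg γ)]
  have e3 : |Hk d γ lam κ ν| ≤ |2 * γ ^ 2 * ν * (erf' (c0 * κ / Dv) * (c0 / Dv))|
      + |γ ^ 2 * (Zd (lam ^ 2 * γ ^ 2) (c0 * κ) * c0)| := by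
    unfold Hk
    rw [← hc0, ← hDv]
    calc |(-(2 * γ ^ 2 * ν * (erf' (c0 * κ / Dv) * (c0 / Dv))))
        + γ ^ 2 * (Zd (lam ^ 2 * γ ^ 2) (c0 * κ) * c0)|
        ≤ |(-(2 * γ ^ 2 * ν * (erf' (c0 * κ / Dv) * (c0 / Dv))))|
          + |γ ^ 2 * (Zd (lam ^ 2 * γ ^ 2) (c0 * κ) * c0)| := abs_add_le _ _
      _ = _ := by rw [abs_neg]
  unfold CC
  rw [← hc0, ← hDv]
  nlinarith [e1, e2, e3, mul_nonneg (sq_nonneg γ) (sq_nonneg (c0 / Dv)),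
    mul_nonneg (sq_nonneg γ) (sq_nonneg c0), sq_nonneg γ]

lemma abs_Hv_le (d : ℕ) (γ lam : ℝ) (hlam : 0 ≤ lam) (κ : ℝ) :
    |Hv d γ lam κ| ≤ CC d γ lam := by
  set c0 := lam * Real.sqrt ((d : ℝ) / 2) with hc0
  set Dv := Real.sqrt (1 + 2 * lam ^ 2 * γ ^ 2) with hDv
  have h1 : (0:ℝ) ≤ c0 := c0_nonneg d lam hlam
  have h2 : (0:ℝ) < Dv := Dv_pos γ lam
  have hcD : (0:ℝ) ≤ c0 / Dv := div_nonneg h1 h2.le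
  have e1 : |Hv d γ lam κ| ≤ 4 * γ ^ 2 := by
    unfold Hv
    rw [← hc0, ← hDv, abs_neg, abs_mul, abs_mul, abs_two, abs_of_nonneg (sq_nonneg γ)]
    nlinarith [abs_erf_le_two (c0 * κ / Dv), sq_nonneg γ, abs_nonneg (erf (c0 * κ / Dv)),
      mul_le_mul_of_nonneg_left (abs_erf_le_two (c0 * κ / Dv))
        (mul_nonneg (by norm_num : (0:ℝ) ≤ 2) (sq_nonneg γ))]
  unfold CC
  rw [← hc0, ← hDv]
  nlinarith [e1, mul_nonneg (sq_nonneg γ) hcD, mul_nonneg (sq_nonneg γ) h1,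
    mul_nonneg (sq_nonneg γ) (sq_nonneg (c0 / Dv)), mul_nonneg (sq_nonneg γ) (sq_nonneg c0)]

lemma Hk_lip_k (d : ℕ) (γ lam : ℝ) (hlam : 0 ≤ lam) (ν : ℝ) (hν : |ν| ≤ 1) (x y : ℝ) :
    |Hk d γ lam y ν - Hk d γ lam x ν| ≤ CC d γ lam * |y - x| := by
  set c0 := lam * Real.sqrt ((d : ℝ) / 2) with hc0
  set Dv := Real.sqrt (1 + 2 * lam ^ 2 * γ ^ 2) with hDv
  have h1 : (0:ℝ) ≤ c0 := c0_nonneg d lam hlam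
  have h2 : (0:ℝ) < Dv := Dv_pos γ lam
  have hcD : (0:ℝ) ≤ c0 / Dv := div_nonneg h1 h2.le
  have hdiff : Hk d γ lam y ν - Hk d γ lam x ν
      = -(2 * γ ^ 2 * ν * (c0 / Dv)) * (erf' (c0 * y / Dv) - erf' (c0 * x / Dv))
        + γ ^ 2 * c0 * (Zd (lam ^ 2 * γ ^ 2) (c0 * y) - Zd (lam ^ 2 * γ ^ 2) (c0 * x)) := by
    unfold Hk
    rw [← hc0, ← hDv]
    ring
  have hu : |c0 * y / Dv - c0 * x / Dv| = c0 / Dv * |y - x| := by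
    rw [show c0 * y / Dv - c0 * x / Dv = (c0 / Dv) * (y - x) by ring, abs_mul,
      abs_of_nonneg hcD]
  have herf : |erf' (c0 * y / Dv) - erf' (c0 * x / Dv)| ≤ 2 * (c0 / Dv) * |y - x| := by
    have := erf'_lip (c0 * x / Dv) (c0 * y / Dv)
    rw [hu] at this
    linarith
  have hz : |Zd (lam ^ 2 * γ ^ 2) (c0 * y) - Zd (lam ^ 2 * γ ^ 2) (c0 * x)|
      ≤ 16 * c0 * |y - x| := by
    have := Zd_lip (lam ^ 2 * γ ^ 2) (c0 * x) (c0 * y)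
    have hu2 : |c0 * y - c0 * x| = c0 * |y - x| := by
      rw [show c0 * y - c0 * x = c0 * (y - x) by ring, abs_mul, abs_of_nonneg h1]
    rw [hu2] at this
    linarith
  have e1 : |(-(2 * γ ^ 2 * ν * (c0 / Dv))) * (erf' (c0 * y / Dv) - erf' (c0 * x / Dv))|
      ≤ 4 * γ ^ 2 * (c0 / Dv) ^ 2 * |y - x| := by
    rw [abs_mul, abs_neg, abs_mul, abs_mul, abs_mul, abs_two, abs_of_nonneg (sq_nonneg γ),
      abs_of_nonneg hcD]
    have hb1 : |ν| * |erf' (c0 * y / Dv) - erf' (c0 * x / Dv)| ≤ 2 * (c0 / Dv) * |y - x| := by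
      nlinarith [abs_nonneg ν, abs_nonneg (erf' (c0 * y / Dv) - erf' (c0 * x / Dv)), herf,
        mul_nonneg hcD (abs_nonneg (y - x))]
    calc 2 * γ ^ 2 * |ν| * (c0 / Dv) * |erf' (c0 * y / Dv) - erf' (c0 * x / Dv)|
        = 2 * γ ^ 2 * (c0 / Dv) * (|ν| * |erf' (c0 * y / Dv) - erf' (c0 * x / Dv)|) := by ring
      _ ≤ 2 * γ ^ 2 * (c0 / Dv) * (2 * (c0 / Dv) * |y - x|) := by
          apply mul_le_mul_of_nonneg_left hb1 (by positivity)
      _ = 4 * γ ^ 2 * (c0 / Dv) ^ 2 * |y - x| := by ring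
  have e2 : |γ ^ 2 * c0 * (Zd (lam ^ 2 * γ ^ 2) (c0 * y) - Zd (lam ^ 2 * γ ^ 2) (c0 * x))|
      ≤ 16 * γ ^ 2 * c0 ^ 2 * |y - x| := by
    rw [abs_mul, abs_mul, abs_of_nonneg (sq_nonneg γ), abs_of_nonneg h1]
    calc γ ^ 2 * c0 * |Zd (lam ^ 2 * γ ^ 2) (c0 * y) - Zd (lam ^ 2 * γ ^ 2) (c0 * x)|
        ≤ γ ^ 2 * c0 * (16 * c0 * |y - x|) := by
          apply mul_le_mul_of_nonneg_left hz (by positivity)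
      _ = 16 * γ ^ 2 * c0 ^ 2 * |y - x| := by ring
  have e3 := abs_add_le ((-(2 * γ ^ 2 * ν * (c0 / Dv))) * (erf' (c0 * y / Dv) - erf' (c0 * x / Dv)))
    (γ ^ 2 * c0 * (Zd (lam ^ 2 * γ ^ 2) (c0 * y) - Zd (lam ^ 2 * γ ^ 2) (c0 * x)))
  rw [← hdiff] at e3
  have hfin : |Hk d γ lam y ν - Hk d γ lam x ν|
      ≤ (4 * γ ^ 2 * (c0 / Dv) ^ 2 + 16 * γ ^ 2 * c0 ^ 2) * |y - x| := by
    nlinarith [e1, e2, e3]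
  have hCfac : (4 * γ ^ 2 * (c0 / Dv) ^ 2 + 16 * γ ^ 2 * c0 ^ 2) * |y - x|
      ≤ CC d γ lam * |y - x| := by
    apply mul_le_mul_of_nonneg_right _ (abs_nonneg _)
    unfold CC
    rw [← hc0, ← hDv]
    nlinarith [mul_nonneg (sq_nonneg γ) hcD, mul_nonneg (sq_nonneg γ) h1, sq_nonneg γ]
  linarith

lemma Hk_lip_v (d : ℕ) (γ lam : ℝ) (hlam : 0 ≤ lam) (κ ν ν' : ℝ) :
    |Hk d γ lam κ ν' - Hk d γ lam κ ν| ≤ CC d γ lam * |ν' - ν| := by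
  set c0 := lam * Real.sqrt ((d : ℝ) / 2) with hc0
  set Dv := Real.sqrt (1 + 2 * lam ^ 2 * γ ^ 2) with hDv
  have h1 : (0:ℝ) ≤ c0 := c0_nonneg d lam hlam
  have h2 : (0:ℝ) < Dv := Dv_pos γ lam
  have hcD : (0:ℝ) ≤ c0 / Dv := div_nonneg h1 h2.le
  have hdiff : Hk d γ lam κ ν' - Hk d γ lam κ ν
      = -(2 * γ ^ 2 * (erf' (c0 * κ / Dv) * (c0 / Dv))) * (ν' - ν) := by
    unfold Hk
    rw [← hc0, ← hDv]
    ring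
  rw [hdiff, abs_mul, abs_neg, abs_mul, abs_mul, abs_mul, abs_two,
    abs_of_nonneg (sq_nonneg γ), abs_of_nonneg hcD]
  have hb : |erf' (c0 * κ / Dv)| * (c0 / Dv) ≤ 2 * (c0 / Dv) :=
    mul_le_mul_of_nonneg_right (erf'_le_two _) hcD
  have hstep : 2 * γ ^ 2 * (|erf' (c0 * κ / Dv)| * (c0 / Dv)) * |ν' - ν|
      ≤ 4 * γ ^ 2 * (c0 / Dv) * |ν' - ν| := by
    have := mul_le_mul_of_nonneg_left hb (by positivity : (0:ℝ) ≤ 2 * γ ^ 2)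
    nlinarith [abs_nonneg (ν' - ν), this]
  have hCfac : 4 * γ ^ 2 * (c0 / Dv) * |ν' - ν| ≤ CC d γ lam * |ν' - ν| := by
    apply mul_le_mul_of_nonneg_right _ (abs_nonneg _)
    unfold CC
    rw [← hc0, ← hDv]
    nlinarith [mul_nonneg (sq_nonneg γ) h1, sq_nonneg γ,
      mul_nonneg (sq_nonneg γ) (sq_nonneg (c0 / Dv)), mul_nonneg (sq_nonneg γ) (sq_nonneg c0)]
  calc 2 * γ ^ 2 * (|erf' (c0 * κ / Dv)| * (c0 / Dv)) * |ν' - ν|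
      ≤ 4 * γ ^ 2 * (c0 / Dv) * |ν' - ν| := hstep
    _ ≤ CC d γ lam * |ν' - ν| := hCfac


/-! ### Algebraic step lemmas -/

/-- new coordinate stays in [-1,1] -/
lemma step_mem (ν b α : ℝ) (hν : |ν| ≤ 1) :
    |(ν - α * b * (1 - ν ^ 2)) / Real.sqrt (1 + α ^ 2 * b ^ 2 * (1 - ν ^ 2))| ≤ 1 := by
  have hw : 0 ≤ 1 - ν ^ 2 := by nlinarith [sq_abs ν, abs_nonneg ν]
  have hs : 0 ≤ α ^ 2 * b ^ 2 * (1 - ν ^ 2) := by positivity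
  have hS : 0 < Real.sqrt (1 + α ^ 2 * b ^ 2 * (1 - ν ^ 2)) := Real.sqrt_pos.mpr (by linarith)
  rw [abs_div, div_le_one (by rwa [abs_of_pos hS])]
  rw [abs_of_pos hS]
  have hsq : (ν - α * b * (1 - ν ^ 2)) ^ 2 ≤ 1 + α ^ 2 * b ^ 2 * (1 - ν ^ 2) := by
    nlinarith [mul_nonneg hw (sq_nonneg (1 + α * b * ν)), sq_abs ν]
  calc |ν - α * b * (1 - ν ^ 2)|
      = Real.sqrt ((ν - α * b * (1 - ν ^ 2)) ^ 2) := (Real.sqrt_sq_eq_abs _).symm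
    _ ≤ Real.sqrt (1 + α ^ 2 * b ^ 2 * (1 - ν ^ 2)) := Real.sqrt_le_sqrt hsq

/-- basic sqrt facts -/
lemma sqrt_facts (s : ℝ) (hs : 0 ≤ s) :
    1 ≤ Real.sqrt (1 + s) ∧ Real.sqrt (1 + s) ≤ 1 + s / 2 := by
  constructor
  · have := Real.sqrt_le_sqrt (show (1:ℝ) ≤ 1 + s by linarith)
    simpa using this
  · rw [show (1 + s / 2 : ℝ) = Real.sqrt ((1 + s / 2) ^ 2) by
      rw [Real.sqrt_sq (by linarith)]]
    exact Real.sqrt_le_sqrt (by nlinarith)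

/-- displacement bound -/
lemma step_disp (κ a α : ℝ) (hκ : |κ| ≤ 1) (hα : 0 < α) :
    |(κ - α * a * (1 - κ ^ 2)) / Real.sqrt (1 + α ^ 2 * a ^ 2 * (1 - κ ^ 2)) - κ|
      ≤ α * |a| * (1 - κ ^ 2) + α ^ 2 * a ^ 2 * (1 - κ ^ 2) / 2 := by
  have hw : 0 ≤ 1 - κ ^ 2 := by nlinarith [sq_abs κ, abs_nonneg κ]
  set s := α ^ 2 * a ^ 2 * (1 - κ ^ 2) with hsdef
  have hs : 0 ≤ s := by positivity
  obtain ⟨hS1, hS2⟩ := sqrt_facts s hs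
  set S := Real.sqrt (1 + s) with hSdef
  have hSpos : 0 < S := by linarith
  have heq : (κ - α * a * (1 - κ ^ 2)) / S - κ = (-(α * a * (1 - κ ^ 2)) - κ * (S - 1)) / S := by
    field_simp
    ring
  rw [heq, abs_div, abs_of_pos hSpos, div_le_iff₀ hSpos]
  have h1 : |(-(α * a * (1 - κ ^ 2)) - κ * (S - 1))| ≤ α * |a| * (1 - κ ^ 2) + (S - 1) := by
    calc |(-(α * a * (1 - κ ^ 2)) - κ * (S - 1))| ≤ |α * a * (1 - κ ^ 2)| + |κ * (S - 1)| := by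
          rw [show -(α * a * (1 - κ ^ 2)) - κ * (S - 1)
            = -((α * a * (1 - κ ^ 2)) + κ * (S - 1)) by ring, abs_neg]
          exact abs_add_le _ _
      _ ≤ α * |a| * (1 - κ ^ 2) + (S - 1) := by
          have e1 : |α * a * (1 - κ ^ 2)| = α * |a| * (1 - κ ^ 2) := by
            rw [abs_mul, abs_mul, abs_of_pos hα, abs_of_nonneg hw]
          have e2 : |κ * (S - 1)| ≤ S - 1 := by
            rw [abs_mul, abs_of_nonneg (by linarith : (0:ℝ) ≤ S - 1)]
            nlinarith [abs_nonneg κ]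
          linarith [e1.le, e2]
  have h2 : α * |a| * (1 - κ ^ 2) + (S - 1) ≤ (α * |a| * (1 - κ ^ 2) + s / 2) * S := by
    nlinarith [mul_nonneg (mul_nonneg hα.le (abs_nonneg a)) hw, hS1, hS2]
  calc |(-(α * a * (1 - κ ^ 2)) - κ * (S - 1))| ≤ α * |a| * (1 - κ ^ 2) + (S - 1) := h1
    _ ≤ (α * |a| * (1 - κ ^ 2) + s / 2) * S := h2

/-- descent estimate for the inner product term -/
lemma step_descent (κ a α : ℝ) (hκ : |κ| ≤ 1) (hα : 0 < α) :
    a * ((κ - α * a * (1 - κ ^ 2)) / Real.sqrt (1 + α ^ 2 * a ^ 2 * (1 - κ ^ 2)) - κ)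
      ≤ -(α * a ^ 2 * (1 - κ ^ 2))
        + (α ^ 2 * a ^ 2 * (1 - κ ^ 2) / 2) * (α * a ^ 2 * (1 - κ ^ 2) + |a|) := by
  have hw : 0 ≤ 1 - κ ^ 2 := by nlinarith [sq_abs κ, abs_nonneg κ]
  set s := α ^ 2 * a ^ 2 * (1 - κ ^ 2) with hsdef
  have hs : 0 ≤ s := by positivity
  obtain ⟨hS1, hS2⟩ := sqrt_facts s hs
  set S := Real.sqrt (1 + s) with hSdef
  have hSpos : 0 < S := by linarith
  have heq : a * ((κ - α * a * (1 - κ ^ 2)) / S - κ)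
      = (-(α * a ^ 2 * (1 - κ ^ 2)) - a * κ * (S - 1)) / S := by
    field_simp
    ring
  rw [heq, div_le_iff₀ hSpos]
  have hak : -(a * κ) ≤ |a| := by
    calc -(a * κ) ≤ |a * κ| := neg_le_abs _
      _ = |a| * |κ| := abs_mul _ _
      _ ≤ |a| := by nlinarith [abs_nonneg a]
  set W := α * a ^ 2 * (1 - κ ^ 2) with hWdef
  have hW : 0 ≤ W := by positivity
  have h1 : (S - 1) * (W - a * κ) ≤ (S - 1) * (W + |a|) := by
    have := mul_le_mul_of_nonneg_left hak (by linarith : (0:ℝ) ≤ S - 1)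
    nlinarith [this]
  have h2 : (S - 1) * (W + |a|) ≤ (s / 2) * (W + |a|) :=
    mul_le_mul_of_nonneg_right (by linarith) (by positivity)
  have h3 : (s / 2) * (W + |a|) ≤ (s / 2) * (W + |a|) * S :=
    le_mul_of_one_le_right (by positivity) hS1
  nlinarith [h1, h2, h3]


/-- displacement is at most twice the gradient step -/
lemma disp2 (κ a α C : ℝ) (hκ : |κ| ≤ 1) (hα : 0 < α) (habs : |a| ≤ C)
    (hαC : α * C ≤ 1/100) :
    |(κ - α * a * (1 - κ ^ 2)) / Real.sqrt (1 + α ^ 2 * a ^ 2 * (1 - κ ^ 2)) - κ|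
      ≤ 2 * (α * |a| * (1 - κ ^ 2)) := by
  have hw1l : (0:ℝ) ≤ 1 - κ ^ 2 := by nlinarith [sq_abs κ, abs_nonneg κ]
  have hαa : α * |a| ≤ 1 / 100 := by
    nlinarith [mul_le_mul_of_nonneg_left habs hα.le, hαC, abs_nonneg a,
      mul_le_mul_of_nonneg_left hαC hα.le]
  have hwa : (0:ℝ) ≤ α * |a| * (1 - κ ^ 2) := by positivity
  have ea : (α * |a|) * (α * |a| * (1 - κ ^ 2)) ≤ (1/100) * (α * |a| * (1 - κ ^ 2)) :=
    mul_le_mul_of_nonneg_right hαa hwa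
  have eeq : α ^ 2 * a ^ 2 * (1 - κ ^ 2) = (α * |a|) * (α * |a| * (1 - κ ^ 2)) := by
    rw [← sq_abs a]; ring
  have key : α ^ 2 * a ^ 2 * (1 - κ ^ 2) / 2 ≤ α * |a| * (1 - κ ^ 2) := by
    rw [eeq]; linarith
  linarith [step_disp κ a α hκ hα]

/-- descent inequality with explicit 7/8 factor -/
lemma desc2 (κ a α C : ℝ) (hκ : |κ| ≤ 1) (hα : 0 < α) (habs : |a| ≤ C)
    (hαC : α * C ≤ 1/100) (hC1 : 1 ≤ C) :
    a * ((κ - α * a * (1 - κ ^ 2)) / Real.sqrt (1 + α ^ 2 * a ^ 2 * (1 - κ ^ 2)) - κ)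
      ≤ -(7/8) * (α * a ^ 2 * (1 - κ ^ 2)) := by
  have hw1l : (0:ℝ) ≤ 1 - κ ^ 2 := by nlinarith [sq_abs κ, abs_nonneg κ]
  have hw1u : 1 - κ ^ 2 ≤ 1 := by nlinarith [sq_nonneg κ]
  have hαa : α * |a| ≤ 1 / 100 := by
    nlinarith [mul_le_mul_of_nonneg_left habs hα.le, hαC, abs_nonneg a,
      mul_le_mul_of_nonneg_left hαC hα.le]
  have hA1 : (0:ℝ) ≤ α * a ^ 2 * (1 - κ ^ 2) := by positivity
  have hsmall : α * (α * a ^ 2 * (1 - κ ^ 2)) + α * |a| ≤ 1 / 4 := by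
    have heq2 : α * (α * a ^ 2 * (1 - κ ^ 2)) = (α * |a|) * (α * |a|) * (1 - κ ^ 2) := by
      rw [← sq_abs a]; ring
    have h1 : (α * |a|) * (α * |a|) ≤ (1/100) * (1/100) :=
      mul_le_mul hαa hαa (by positivity) (by norm_num)
    have h2 : (α * |a|) * (α * |a|) * (1 - κ ^ 2) ≤ (1/100) * (1/100) * 1 := by
      apply mul_le_mul h1 hw1u hw1l (by norm_num)
    rw [heq2]; linarith
  have hh : α * (α * a ^ 2 * (1 - κ ^ 2) + |a|) / 2 ≤ 1/8 := by nlinarith [hsmall]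
  have corr : (α ^ 2 * a ^ 2 * (1 - κ ^ 2) / 2) * (α * a ^ 2 * (1 - κ ^ 2) + |a|)
      ≤ (1/8) * (α * a ^ 2 * (1 - κ ^ 2)) := by
    calc (α ^ 2 * a ^ 2 * (1 - κ ^ 2) / 2) * (α * a ^ 2 * (1 - κ ^ 2) + |a|)
        = (α * a ^ 2 * (1 - κ ^ 2)) * (α * (α * a ^ 2 * (1 - κ ^ 2) + |a|) / 2) := by ring
      _ ≤ (α * a ^ 2 * (1 - κ ^ 2)) * (1/8) := mul_le_mul_of_nonneg_left hh hA1
      _ = (1/8) * (α * a ^ 2 * (1 - κ ^ 2)) := by ring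
  linarith [step_descent κ a α hκ hα]

/-- quadratic error term -/
lemma quad2 (Δ a w α C : ℝ) (hw0 : 0 ≤ w) (hw1 : w ≤ 1) (hα : 0 < α) (hC : 0 < C)
    (hαC : α * C ≤ 1/100) (hΔ : |Δ| ≤ 2 * (α * |a| * w)) :
    C * Δ ^ 2 ≤ (1/8) * (α * a ^ 2 * w) := by
  have hΔsq : Δ ^ 2 ≤ 4 * (α * |a| * w) ^ 2 := by
    nlinarith [mul_le_mul hΔ hΔ (abs_nonneg _) (by positivity), sq_abs Δ]
  have h1 : C * Δ ^ 2 ≤ C * (4 * (α * |a| * w) ^ 2) :=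
    mul_le_mul_of_nonneg_left hΔsq hC.le
  have hfac : 4 * (α * C) * w ≤ 1/8 := by
    nlinarith [hαC, hw0, hw1, mul_pos hα hC]
  have hbase : (0:ℝ) ≤ α * |a| ^ 2 * w := by positivity
  have h2 : C * (4 * (α * |a| * w) ^ 2) ≤ (1/8) * (α * a ^ 2 * w) := by
    calc C * (4 * (α * |a| * w) ^ 2)
        = (4 * (α * C) * w) * (α * |a| ^ 2 * w) := by ring
      _ ≤ (1/8) * (α * |a| ^ 2 * w) := by
          apply mul_le_mul_of_nonneg_right hfac (by positivity)
      _ = (1/8) * (α * a ^ 2 * w) := by rw [sq_abs]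
  linarith

/-- cross error term -/
lemma cross2 (Δ1 Δ2 a b w1 w2 α C : ℝ) (hw1l : 0 ≤ w1) (hw2l : 0 ≤ w2)
    (hw1u : w1 ≤ 1) (hw2u : w2 ≤ 1) (hα : 0 < α) (hC : 0 < C) (hαC : α * C ≤ 1/100)
    (hΔ1 : |Δ1| ≤ 2 * (α * |a| * w1)) (hΔ2 : |Δ2| ≤ 2 * (α * |b| * w2)) :
    C * |Δ2| * |Δ1| ≤ (1/8) * (α * a ^ 2 * w1 + α * b ^ 2 * w2) := by
  have hmm : |Δ2| * |Δ1| ≤ (2 * (α * |b| * w2)) * (2 * (α * |a| * w1)) :=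
    mul_le_mul hΔ2 hΔ1 (abs_nonneg _) (by positivity)
  have h1 : C * |Δ2| * |Δ1| ≤ C * ((2 * (α * |b| * w2)) * (2 * (α * |a| * w1))) := by
    calc C * |Δ2| * |Δ1| = C * (|Δ2| * |Δ1|) := by ring
      _ ≤ C * ((2 * (α * |b| * w2)) * (2 * (α * |a| * w1))) :=
          mul_le_mul_of_nonneg_left hmm hC.le
  have hAM : |a| * w1 * (|b| * w2) ≤ (a ^ 2 * w1 + b ^ 2 * w2) / 2 := by
    rw [← sq_abs a, ← sq_abs b]
    nlinarith [sq_nonneg (|a| * w1 - |b| * w2),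
      mul_le_mul_of_nonneg_left hw1u (mul_nonneg (sq_nonneg (|a|)) hw1l),
      mul_le_mul_of_nonneg_left hw2u (mul_nonneg (sq_nonneg (|b|)) hw2l)]
  have hfac2 : 2 * (α * C) ≤ 1/8 := by linarith
  have h2 : C * ((2 * (α * |b| * w2)) * (2 * (α * |a| * w1)))
      ≤ (1/8) * (α * a ^ 2 * w1 + α * b ^ 2 * w2) := by
    calc C * ((2 * (α * |b| * w2)) * (2 * (α * |a| * w1)))
        = (4 * (α * C) * α) * (|a| * w1 * (|b| * w2)) := by ring
      _ ≤ (4 * (α * C) * α) * ((a ^ 2 * w1 + b ^ 2 * w2) / 2) := by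
          apply mul_le_mul_of_nonneg_left hAM (by positivity)
      _ = (2 * (α * C)) * (α * (a ^ 2 * w1 + b ^ 2 * w2)) := by ring
      _ ≤ (1/8) * (α * (a ^ 2 * w1 + b ^ 2 * w2)) := by
          apply mul_le_mul_of_nonneg_right hfac2
          positivity
      _ = (1/8) * (α * a ^ 2 * w1 + α * b ^ 2 * w2) := by ring
  linarith

/-- Core descent computation for the PGD step, with abstract risk `R`. -/
lemma descent_core (R Fk : ℝ → ℝ → ℝ) (Fv : ℝ → ℝ) (C α κ ν a b : ℝ)
    (ha : a = Fk κ ν) (hb : b = Fv κ)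
    (hC1 : 1 ≤ C) (hα : 0 < α) (hαC : α * C ≤ 1/100)
    (hκ : |κ| ≤ 1) (hν : |ν| ≤ 1)
    (hderiv : ∀ ν₀ x, HasDerivAt (fun t => R t ν₀) (Fk x ν₀) x)
    (hlin : ∀ ν₀ ν₁, R κ ν₁ - R κ ν₀ = Fv κ * (ν₁ - ν₀))
    (hbk : |Fk κ ν| ≤ C) (hbv : |Fv κ| ≤ C)
    (hlipk : ∀ ν₀, |ν₀| ≤ 1 → ∀ x y, |Fk y ν₀ - Fk x ν₀| ≤ C * |y - x|)
    (hlipv : ∀ ν₀ ν₁, |Fk κ ν₁ - Fk κ ν₀| ≤ C * |ν₁ - ν₀|) :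
    R ((κ - α * a * (1 - κ ^ 2)) / Real.sqrt (1 + α ^ 2 * a ^ 2 * (1 - κ ^ 2)))
      ((ν - α * b * (1 - ν ^ 2)) / Real.sqrt (1 + α ^ 2 * b ^ 2 * (1 - ν ^ 2))) - R κ ν
      ≤ -(α / 2) * (a ^ 2 * (1 - κ ^ 2) + b ^ 2 * (1 - ν ^ 2)) := by
  have hCpos : (0:ℝ) < C := by linarith
  have hw1l : (0:ℝ) ≤ 1 - κ ^ 2 := by nlinarith [sq_abs κ, abs_nonneg κ]
  have hw1u : 1 - κ ^ 2 ≤ 1 := by nlinarith [sq_nonneg κ]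
  have hw2l : (0:ℝ) ≤ 1 - ν ^ 2 := by nlinarith [sq_abs ν, abs_nonneg ν]
  have hw2u : 1 - ν ^ 2 ≤ 1 := by nlinarith [sq_nonneg ν]
  have habs_a : |a| ≤ C := ha ▸ hbk
  have habs_b : |b| ≤ C := hb ▸ hbv
  -- quantitative step estimates, referring to the explicit update formulas
  have n1 := desc2 κ a α C hκ hα habs_a hαC hC1
  have n2 := desc2 ν b α C hν hα habs_b hαC hC1
  have hΔ1 := disp2 κ a α C hκ hα habs_a hαC
  have hΔ2 := disp2 ν b α C hν hα habs_b hαC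
  set κ' := (κ - α * a * (1 - κ ^ 2)) / Real.sqrt (1 + α ^ 2 * a ^ 2 * (1 - κ ^ 2)) with hκ'def
  set ν' := (ν - α * b * (1 - ν ^ 2)) / Real.sqrt (1 + α ^ 2 * b ^ 2 * (1 - ν ^ 2)) with hν'def
  have hν'1 : |ν'| ≤ 1 := step_mem ν b α hν
  clear_value κ' ν'
  clear hκ'def hν'def
  have n3 := quad2 (κ' - κ) a (1 - κ ^ 2) α C hw1l hw1u hα hCpos hαC hΔ1
  have n4 := cross2 (κ' - κ) (ν' - ν) a b (1 - κ ^ 2) (1 - ν ^ 2) α C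
    hw1l hw2l hw1u hw2u hα hCpos hαC hΔ1 hΔ2
  have T1 : R κ' ν' - R κ ν' ≤ Fk κ ν' * (κ' - κ) + C * (κ' - κ) ^ 2 :=
    taylor_bound (fun x => R x ν') (fun x => Fk x ν') C
      (fun x => hderiv ν' x) (fun x y => hlipk ν' hν'1 x y) κ κ'
  have T2 : R κ ν' - R κ ν = b * (ν' - ν) := by
    rw [hb]; exact hlin ν ν'
  have hcross0 : |Fk κ ν' - a| ≤ C * |ν' - ν| := ha ▸ hlipv ν ν'
  have hcross : (Fk κ ν' - a) * (κ' - κ) ≤ C * |ν' - ν| * |κ' - κ| := by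
    calc (Fk κ ν' - a) * (κ' - κ)
        ≤ |(Fk κ ν' - a) * (κ' - κ)| := le_abs_self _
      _ = |Fk κ ν' - a| * |κ' - κ| := abs_mul _ _
      _ ≤ C * |ν' - ν| * |κ' - κ| :=
          mul_le_mul_of_nonneg_right hcross0 (abs_nonneg _)
  have G1 : R κ' ν' - R κ ν
      ≤ a * (κ' - κ) + C * |ν' - ν| * |κ' - κ| + C * (κ' - κ) ^ 2 + b * (ν' - ν) := by
    have hsplit : Fk κ ν' * (κ' - κ)
        = a * (κ' - κ) + (Fk κ ν' - a) * (κ' - κ) := by ring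
    nlinarith [T1, T2, hcross, hsplit]
  have hA1 : (0:ℝ) ≤ α * a ^ 2 * (1 - κ ^ 2) := by positivity
  have hA2 : (0:ℝ) ≤ α * b ^ 2 * (1 - ν ^ 2) := by positivity
  have hgoal_eq : -(α / 2) * (a ^ 2 * (1 - κ ^ 2) + b ^ 2 * (1 - ν ^ 2))
      = -(1/2) * (α * a ^ 2 * (1 - κ ^ 2)) + -(1/2) * (α * b ^ 2 * (1 - ν ^ 2)) := by ring
  rw [hgoal_eq]
  linarith [G1, n1, n2, n3, n4, hA1, hA2]

/-! ### Main theorem -/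

/-- Descent lemma: for small enough step size, one PGD step decreases the reduced risk
by at least `(α/2)·[(∂κR)²(1−κ²) + (∂νR)²(1−ν²)]`. -/
theorem stmt8 (d L : ℕ) (hd : 1 ≤ d) (hL : 1 ≤ L) (γ lam ε : ℝ)
    (hγ : 0 < γ) (hlam : 0 < lam) (hε : 0 ≤ ε) :
    ∃ abar : ℝ, 0 < abar ∧ ∀ α : ℝ, 0 < α → α ≤ abar → ∀ p ∈ sqIcc,
      Rred d L γ lam ε (pgd d L γ lam ε α p).1 (pgd d L γ lam ε α p).2
          - Rred d L γ lam ε p.1 p.2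
        ≤ -(α / 2) * ((dkR d L γ lam ε p.1 p.2) ^ 2 * (1 - p.1 ^ 2)
            + (dvR d L γ lam ε p.1 p.2) ^ 2 * (1 - p.2 ^ 2)) := by
  have hC1 : 1 ≤ CC d γ lam := one_le_CC d γ lam hlam.le
  have hCpos : (0:ℝ) < CC d γ lam := by linarith
  refine ⟨1 / (100 * CC d γ lam), by positivity, ?_⟩
  intro α hα hαbar p hp
  obtain ⟨⟨hκ1, hκ2⟩, hν1, hν2⟩ := hp
  have hκ : |p.1| ≤ 1 := abs_le.mpr ⟨hκ1, hκ2⟩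
  have hν : |p.2| ≤ 1 := abs_le.mpr ⟨hν1, hν2⟩
  have hαC : α * CC d γ lam ≤ 1 / 100 := by
    rw [le_div_iff₀ (by positivity : (0:ℝ) < 100 * CC d γ lam)] at hαbar
    nlinarith [hαbar]
  have key := descent_core (fun x y => Rred d L γ lam ε x y) (fun x y => Hk d γ lam x y)
    (fun x => Hv d γ lam x) (CC d γ lam) α p.1 p.2
    (dkR d L γ lam ε p.1 p.2) (dvR d L γ lam ε p.1 p.2)
    (dkR_eq d L γ lam ε p.1 p.2) (dvR_eq d L γ lam ε p.1 p.2)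
    hC1 hα hαC hκ hν
    (fun ν₀ x => Rred_hasDerivAt_k d L γ lam ε ν₀ x)
    (fun ν₀ ν₁ => Rred_lin d L γ lam ε p.1 ν₀ ν₁)
    (abs_Hk_le d γ lam hlam.le p.1 p.2 hν)
    (abs_Hv_le d γ lam hlam.le p.1)
    (fun ν₀ h x y => Hk_lip_k d γ lam hlam.le ν₀ h x y)
    (fun ν₀ ν₁ => Hk_lip_v d γ lam hlam.le p.1 ν₀ ν₁)
  exact key
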